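/- Let g be a metric on an open set U ⊆ ℝ⁴, let R = (R^{αβ}) be a smooth contravariant 2-tensor field on U, let X be a smooth vector field on U, and let φ : U → ℝ be smooth. Then pointwise on U, X( (∇_αR^{αβ}∇_β)φ ) − (∇_αR^{αβ}∇_β)(Xφ) = (∇_α (L_XR)^{αβ} ∇_β)φ + R^{αβ} ∂_α(∇_γX^γ) ∂_βφ. -/

import Mathlib

noncomputable section

/-- Points of the coordinate chart `ℝ⁴`. -/
abbrev Pt : Type := Fin 4 → ℝ

/-- Coordinate partial derivative `∂_α f`. -/
def pd (α : Fin 4) (f : Pt → ℝ) (x : Pt) : ℝ :=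
  fderiv ℝ f x (Pi.single α (1 : ℝ))

/-- `|g| = |det (g_{αβ})|`. -/
def adet (g : Pt → Matrix (Fin 4) (Fin 4) ℝ) (x : Pt) : ℝ := |(g x).det|

/-- Inverse metric `g^{αβ}`. -/
def ginv (g : Pt → Matrix (Fin 4) (Fin 4) ℝ) (x : Pt) : Matrix (Fin 4) (Fin 4) ℝ := (g x)⁻¹

/-- The wave operator `□_g φ = |g|^{-1/2} ∂_α(|g|^{1/2} g^{αβ} ∂_β φ)`. -/
def boxg (g : Pt → Matrix (Fin 4) (Fin 4) ℝ) (φ : Pt → ℝ) (x : Pt) : ℝ :=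
  (Real.sqrt (adet g x))⁻¹ *
    ∑ α : Fin 4, pd α (fun y => Real.sqrt (adet g y) * ∑ β : Fin 4, ginv g y α β * pd β φ y) x

/-- `X f = X^α ∂_α f`. -/
def Xapp (X : Fin 4 → Pt → ℝ) (f : Pt → ℝ) (x : Pt) : ℝ := ∑ γ : Fin 4, X γ x * pd γ f x

/-- A smooth symmetric everywhere-nondegenerate metric on `U`. -/
structure IsMetricOn (g : Pt → Matrix (Fin 4) (Fin 4) ℝ) (U : Set Pt) : Prop where
  smooth : ∀ α β : Fin 4, ContDiffOn ℝ (⊤ : ℕ∞) (fun x => g x α β) U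
  symm : ∀ x ∈ U, ∀ α β : Fin 4, g x α β = g x β α
  det_ne : ∀ x ∈ U, (g x).det ≠ 0

/-- Deformation tensor `π_{αβ} = (L_X g)_{αβ}` of `X` (lower indices). -/
def piLow (g : Pt → Matrix (Fin 4) (Fin 4) ℝ) (X : Fin 4 → Pt → ℝ) (x : Pt) (α β : Fin 4) : ℝ :=
  (∑ γ : Fin 4, X γ x * pd γ (fun y => g y α β) x)
    + (∑ γ : Fin 4, g x γ β * pd α (X γ) x) + (∑ γ : Fin 4, g x α γ * pd β (X γ) x)

/-- Raised deformation tensor `π^{αβ}`. -/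
def piUp (g : Pt → Matrix (Fin 4) (Fin 4) ℝ) (X : Fin 4 → Pt → ℝ) (x : Pt) (α β : Fin 4) : ℝ :=
  ∑ α' : Fin 4, ∑ β' : Fin 4, ginv g x α α' * ginv g x β β' * piLow g X x α' β'

/-- Normalized deformation tensor `π̂^{αβ} = π^{αβ} - (1/2) g^{αβ} (g_{γδ} π^{γδ})`. -/
def hatPi (g : Pt → Matrix (Fin 4) (Fin 4) ℝ) (X : Fin 4 → Pt → ℝ) (x : Pt) (α β : Fin 4) : ℝ :=
  piUp g X x α β - (1/2) * ginv g x α β * (∑ γ : Fin 4, ∑ δ : Fin 4, g x γ δ * piUp g X x γ δ)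

/-- Second-order operator `(∇_α R^{αβ} ∇_β)φ = |g|^{-1/2}∂_α(|g|^{1/2} R^{αβ} ∂_βφ)`. -/
def divForm (g : Pt → Matrix (Fin 4) (Fin 4) ℝ) (R : Pt → Fin 4 → Fin 4 → ℝ)
    (φ : Pt → ℝ) (x : Pt) : ℝ :=
  (Real.sqrt (adet g x))⁻¹ *
    ∑ α : Fin 4, pd α (fun y => Real.sqrt (adet g y) * ∑ β : Fin 4, R y α β * pd β φ y) x

/-- Lie derivative of a contravariant 2-tensor:
`(L_X R)^{αβ} = X^γ∂_γR^{αβ} - R^{γβ}∂_γX^α - R^{αγ}∂_γX^β`. -/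
def lieT (X : Fin 4 → Pt → ℝ) (R : Pt → Fin 4 → Fin 4 → ℝ) (x : Pt) (α β : Fin 4) : ℝ :=
  (∑ γ : Fin 4, X γ x * pd γ (fun y => R y α β) x)
    - (∑ γ : Fin 4, R x γ β * pd γ (X α) x)
    - (∑ γ : Fin 4, R x α γ * pd γ (X β) x)

/-- Covariant divergence `∇_αX^α = |g|^{-1/2}∂_α(|g|^{1/2}X^α)`. -/
def covDiv (g : Pt → Matrix (Fin 4) (Fin 4) ℝ) (X : Fin 4 → Pt → ℝ) (x : Pt) : ℝ :=
  (Real.sqrt (adet g x))⁻¹ * ∑ γ : Fin 4, pd γ (fun y => Real.sqrt (adet g y) * X γ y) x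

section Aux

open Filter Topology

variable {U : Set Pt} {f g : Pt → ℝ} {x : Pt}

lemma pd_congr_on (hU : IsOpen U) (h : ∀ y ∈ U, f y = g y) (hx : x ∈ U) (α : Fin 4) :
    pd α f x = pd α g x := by
  unfold pd
  rw [Filter.EventuallyEq.fderiv_eq (Filter.eventually_of_mem (hU.mem_nhds hx) h)]

lemma pd_add (hf : DifferentiableAt ℝ f x) (hg : DifferentiableAt ℝ g x) (α : Fin 4) :
    pd α (fun y => f y + g y) x = pd α f x + pd α g x := by
  unfold pd; rw [fderiv_fun_add hf hg]; simp

lemma pd_sub (hf : DifferentiableAt ℝ f x) (hg : DifferentiableAt ℝ g x) (α : Fin 4) :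
    pd α (fun y => f y - g y) x = pd α f x - pd α g x := by
  unfold pd; rw [fderiv_fun_sub hf hg]; simp

lemma pd_mul (hf : DifferentiableAt ℝ f x) (hg : DifferentiableAt ℝ g x) (α : Fin 4) :
    pd α (fun y => f y * g y) x = pd α f x * g x + f x * pd α g x := by
  unfold pd; rw [fderiv_fun_mul hf hg]; simp; ring

lemma pd_sum {ι : Type*} {s : Finset ι} {F : ι → Pt → ℝ}
    (hf : ∀ i ∈ s, DifferentiableAt ℝ (F i) x) (α : Fin 4) :
    pd α (fun y => ∑ i ∈ s, F i y) x = ∑ i ∈ s, pd α (F i) x := by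
  unfold pd; rw [fderiv_fun_sum hf]; simp

lemma pd_inv (hf : DifferentiableAt ℝ f x) (h0 : f x ≠ 0) (α : Fin 4) :
    pd α (fun y => (f y)⁻¹) x = -(f x ^ 2)⁻¹ * pd α f x := by
  have h := ((hasFDerivAt_inv h0).comp x hf.hasFDerivAt).fderiv
  unfold pd
  rw [show (fun y => (f y)⁻¹) = Inv.inv ∘ f from rfl, h]; simp; ring

lemma pd_const (c : ℝ) (α : Fin 4) : pd α (fun _ => c) x = 0 := by
  unfold pd; simp

abbrev SmOn (U : Set Pt) (f : Pt → ℝ) : Prop := ContDiffOn ℝ (⊤ : ℕ∞) f U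

lemma wtop1 : (1 : WithTop ℕ∞) ≤ ((⊤ : ℕ∞) : WithTop ℕ∞) := by exact_mod_cast le_top
lemma wtop2 : (2 : WithTop ℕ∞) ≤ ((⊤ : ℕ∞) : WithTop ℕ∞) := by
  have : ((2:ℕ∞) : WithTop ℕ∞) ≤ ((⊤ : ℕ∞) : WithTop ℕ∞) := WithTop.coe_le_coe.mpr le_top
  convert this using 2
  norm_cast
lemma wtops : ((⊤ : ℕ∞) : WithTop ℕ∞) + 1 ≤ ((⊤ : ℕ∞) : WithTop ℕ∞) := by exact_mod_cast le_top

lemma SmOn.diffAt (hU : IsOpen U) (hf : SmOn U f) (hx : x ∈ U) : DifferentiableAt ℝ f x :=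
  (hf.contDiffAt (hU.mem_nhds hx)).differentiableAt (by simp)

lemma SmOn.pd (hU : IsOpen U) (hf : SmOn U f) (β : Fin 4) : SmOn U (fun y => pd β f y) :=
  (hf.fderiv_of_isOpen hU wtops).clm_apply contDiffOn_const

lemma pd_symm (hU : IsOpen U) (hf : SmOn U f) (hx : x ∈ U) (a b : Fin 4) :
    pd a (fun y => pd b f y) x = pd b (fun y => pd a f y) x := by
  have hca : ContDiffAt ℝ ((⊤ : ℕ∞) : WithTop ℕ∞) f x := hf.contDiffAt (hU.mem_nhds hx)
  have hsym : IsSymmSndFDerivAt ℝ f x := hca.isSymmSndFDerivAt (by simpa using wtop2)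
  have hd : DifferentiableAt ℝ (fderiv ℝ f) x :=
    ((hf.fderiv_of_isOpen hU wtops).contDiffAt (hU.mem_nhds hx)).differentiableAt (by simp)
  have key : ∀ (c : Fin 4) (v : Pt),
      pd c (fun y => fderiv ℝ f y v) x = fderiv ℝ (fderiv ℝ f) x (Pi.single c 1) v := by
    intro c v
    unfold pd
    rw [fderiv_clm_apply hd (differentiableAt_const v)]
    simp
  show pd a (fun y => fderiv ℝ f y (Pi.single b 1)) x
      = pd b (fun y => fderiv ℝ f y (Pi.single a 1)) x
  rw [key a, key b, hsym.eq]

lemma smOn_det {g : Pt → Matrix (Fin 4) (Fin 4) ℝ}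
    (hg : ∀ α β : Fin 4, ContDiffOn ℝ (⊤ : ℕ∞) (fun x => g x α β) U) :
    SmOn U (fun y => (g y).det) := by
  have h : (fun y => (g y).det)
      = fun y => ∑ σ : Equiv.Perm (Fin 4), (((Equiv.Perm.sign σ : ℤ) : ℝ)) * ∏ i, g y (σ i) i := by
    funext y; rw [Matrix.det_apply']
  rw [h]
  apply ContDiffOn.sum
  intro σ _
  apply ContDiffOn.mul contDiffOn_const
  have h2 : (fun y => ∏ i, g y (σ i) i)
      = fun y => ((g y (σ 0) 0 * g y (σ 1) 1) * g y (σ 2) 2) * g y (σ 3) 3 := by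
    funext y; rw [Fin.prod_univ_four]
  rw [h2]
  exact (((hg _ _).mul (hg _ _)).mul (hg _ _)).mul (hg _ _)

lemma smOn_sqrt_abs (hU : IsOpen U) {d : Pt → ℝ} (hd : SmOn U d) (h0 : ∀ y ∈ U, d y ≠ 0) :
    SmOn U (fun y => Real.sqrt |d y|) := by
  intro x hx
  apply ContDiffAt.contDiffWithinAt
  have hc : ContDiffAt ℝ ((⊤ : ℕ∞) : WithTop ℕ∞) d x := hd.contDiffAt (hU.mem_nhds hx)
  rcases lt_or_gt_of_ne (h0 x hx) with h | h
  · have hev : (fun y => Real.sqrt |d y|) =ᶠ[nhds x] fun y => Real.sqrt (-(d y)) := by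
      filter_upwards [hc.continuousAt.preimage_mem_nhds (Iio_mem_nhds h)] with y hy
      rw [abs_of_neg hy]
    exact ((hc.neg.sqrt (by simpa using ne_of_gt (neg_pos.mpr h))).congr_of_eventuallyEq hev)
  · have hev : (fun y => Real.sqrt |d y|) =ᶠ[nhds x] fun y => Real.sqrt (d y) := by
      filter_upwards [hc.continuousAt.preimage_mem_nhds (Ioi_mem_nhds h)] with y hy
      rw [abs_of_pos hy]
    exact ((hc.sqrt (ne_of_gt h)).congr_of_eventuallyEq hev)

def Dw (w : Pt → ℝ) (R : Pt → Fin 4 → Fin 4 → ℝ) (φ : Pt → ℝ) (x : Pt) : ℝ :=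
  (w x)⁻¹ * ∑ i : Fin 4, pd i (fun y => w y * ∑ j : Fin 4, R y i j * pd j φ y) x

def cDiv (w : Pt → ℝ) (X : Fin 4 → Pt → ℝ) (x : Pt) : ℝ :=
  (w x)⁻¹ * ∑ k : Fin 4, pd k (fun y => w y * X k y) x

section main
variable {w : Pt → ℝ} {R : Pt → Fin 4 → Fin 4 → ℝ} {φ : Pt → ℝ} {X : Fin 4 → Pt → ℝ}

lemma Dw_pt (hU : IsOpen U) (hw : SmOn U w) (hw0 : ∀ y ∈ U, w y ≠ 0)
    (hR : ∀ i j, SmOn U (fun y => R y i j)) (hφ : SmOn U φ) (hx : x ∈ U) :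
    Dw w R φ x = ∑ i : Fin 4, ∑ j : Fin 4,
      ((w x)⁻¹ * pd i w x * R x i j * pd j φ x
        + pd i (fun y => R y i j) x * pd j φ x
        + R x i j * pd i (fun z => pd j φ z) x) := by
  have hwx := hw0 x hx
  have hS : ∀ i, SmOn U (fun y => ∑ j : Fin 4, R y i j * pd j φ y) :=
    fun i => ContDiffOn.sum fun j _ => (hR i j).mul (hφ.pd hU j)
  unfold Dw
  rw [Finset.mul_sum]
  refine Finset.sum_congr rfl fun i _ => ?_
  rw [pd_mul (SmOn.diffAt hU hw hx) (SmOn.diffAt hU (hS i) hx),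
    pd_sum (fun j _ => SmOn.diffAt hU ((hR i j).mul (hφ.pd hU j)) hx)]
  have h2 : ∀ j ∈ (Finset.univ : Finset (Fin 4)), pd i (fun y => R y i j * pd j φ y) x
      = pd i (fun y => R y i j) x * pd j φ x + R x i j * pd i (fun z => pd j φ z) x :=
    fun j _ => pd_mul (SmOn.diffAt hU (hR i j) hx) (SmOn.diffAt hU (hφ.pd hU j) hx) i
  rw [Finset.sum_congr rfl h2, mul_add, Finset.mul_sum, inv_mul_cancel_left₀ hwx,
    Finset.mul_sum, ← Finset.sum_add_distrib]
  refine Finset.sum_congr rfl fun j _ => ?_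
  ring

lemma pd_Dw (hU : IsOpen U) (hw : SmOn U w) (hw0 : ∀ y ∈ U, w y ≠ 0)
    (hR : ∀ i j, SmOn U (fun y => R y i j)) (hφ : SmOn U φ) (hx : x ∈ U) (a : Fin 4) :
    pd a (Dw w R φ) x = ∑ i : Fin 4, ∑ j : Fin 4,
      (-(w x ^ 2)⁻¹ * pd a w x * pd i w x * R x i j * pd j φ x
        + (w x)⁻¹ * pd a (fun y => pd i w y) x * R x i j * pd j φ x
        + (w x)⁻¹ * pd i w x * pd a (fun y => R y i j) x * pd j φ x
        + (w x)⁻¹ * pd i w x * R x i j * pd a (fun y => pd j φ y) x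
        + pd a (fun y => pd i (fun z => R z i j) y) x * pd j φ x
        + pd i (fun y => R y i j) x * pd a (fun y => pd j φ y) x
        + pd a (fun y => R y i j) x * pd i (fun z => pd j φ z) x
        + R x i j * pd a (fun y => pd i (fun z => pd j φ z) y) x) := by
  have hwx := hw0 x hx
  have hv : SmOn U (fun y => (w y)⁻¹) := hw.inv hw0
  have hE1 : ∀ i j : Fin 4, SmOn U (fun y => (w y)⁻¹ * pd i w y * R y i j * pd j φ y) :=
    fun i j => ((hv.mul (hw.pd hU i)).mul (hR i j)).mul (hφ.pd hU j)
  have hE2 : ∀ i j : Fin 4, SmOn U (fun y => pd i (fun z => R z i j) y * pd j φ y) :=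
    fun i j => ((hR i j).pd hU i).mul (hφ.pd hU j)
  have hE3 : ∀ i j : Fin 4, SmOn U (fun y => R y i j * pd i (fun z => pd j φ z) y) :=
    fun i j => (hR i j).mul ((hφ.pd hU j).pd hU i)
  have hE : ∀ i j : Fin 4, SmOn U (fun y =>
      (w y)⁻¹ * pd i w y * R y i j * pd j φ y
        + pd i (fun z => R z i j) y * pd j φ y + R y i j * pd i (fun z => pd j φ z) y) :=
    fun i j => ((hE1 i j).add (hE2 i j)).add (hE3 i j)
  have key : ∀ y ∈ U, Dw w R φ y = ∑ i : Fin 4, ∑ j : Fin 4,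
      ((w y)⁻¹ * pd i w y * R y i j * pd j φ y
        + pd i (fun z => R z i j) y * pd j φ y + R y i j * pd i (fun z => pd j φ z) y) :=
    fun y hy => Dw_pt hU hw hw0 hR hφ hy
  rw [pd_congr_on hU key hx a,
    pd_sum (fun i _ => SmOn.diffAt hU (ContDiffOn.sum fun j _ => hE i j) hx) a]
  refine Finset.sum_congr rfl fun i _ => ?_
  rw [pd_sum (fun j _ => SmOn.diffAt hU (hE i j) hx) a]
  refine Finset.sum_congr rfl fun j _ => ?_
  have dv := SmOn.diffAt hU hv hx
  have dw := SmOn.diffAt hU hw hx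
  have ddw : ∀ i : Fin 4, DifferentiableAt ℝ (fun y => pd i w y) x :=
    fun i => SmOn.diffAt hU (hw.pd hU i) hx
  have dR : ∀ i j : Fin 4, DifferentiableAt ℝ (fun y => R y i j) x :=
    fun i j => SmOn.diffAt hU (hR i j) hx
  have ddR : ∀ i j : Fin 4, DifferentiableAt ℝ (fun y => pd i (fun z => R z i j) y) x :=
    fun i j => SmOn.diffAt hU ((hR i j).pd hU i) hx
  have ddφ : ∀ j : Fin 4, DifferentiableAt ℝ (fun y => pd j φ y) x :=
    fun j => SmOn.diffAt hU (hφ.pd hU j) hx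
  have dd2φ : ∀ i j : Fin 4, DifferentiableAt ℝ (fun y => pd i (fun z => pd j φ z) y) x :=
    fun i j => SmOn.diffAt hU ((hφ.pd hU j).pd hU i) hx
  rw [pd_add (SmOn.diffAt hU ((hE1 i j).add (hE2 i j)) hx) (SmOn.diffAt hU (hE3 i j) hx),
    pd_add (SmOn.diffAt hU (hE1 i j) hx) (SmOn.diffAt hU (hE2 i j) hx),
    pd_mul (SmOn.diffAt hU ((hv.mul (hw.pd hU i)).mul (hR i j)) hx) (ddφ j),
    pd_mul (SmOn.diffAt hU (hv.mul (hw.pd hU i)) hx) (dR i j),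
    pd_mul dv (ddw i),
    pd_inv dw hwx a,
    pd_mul (ddR i j) (ddφ j),
    pd_mul (dR i j) (dd2φ i j)]
  ring

lemma cDiv_pt (hU : IsOpen U) (hw : SmOn U w) (hw0 : ∀ y ∈ U, w y ≠ 0)
    (hX : ∀ k, SmOn U (X k)) (hx : x ∈ U) :
    cDiv w X x = ∑ k : Fin 4, ((w x)⁻¹ * pd k w x * X k x + pd k (X k) x) := by
  have hwx := hw0 x hx
  unfold cDiv
  rw [Finset.mul_sum]
  refine Finset.sum_congr rfl fun k _ => ?_
  rw [pd_mul (SmOn.diffAt hU hw hx) (SmOn.diffAt hU (hX k) hx)]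
  field_simp

lemma pd_cDiv (hU : IsOpen U) (hw : SmOn U w) (hw0 : ∀ y ∈ U, w y ≠ 0)
    (hX : ∀ k, SmOn U (X k)) (hx : x ∈ U) (i : Fin 4) :
    pd i (cDiv w X) x = ∑ k : Fin 4,
      (-(w x ^ 2)⁻¹ * pd i w x * pd k w x * X k x
        + (w x)⁻¹ * pd i (fun y => pd k w y) x * X k x
        + (w x)⁻¹ * pd k w x * pd i (X k) x
        + pd i (fun y => pd k (X k) y) x) := by
  have hwx := hw0 x hx
  have hv : SmOn U (fun y => (w y)⁻¹) := hw.inv hw0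
  have hE1 : ∀ k : Fin 4, SmOn U (fun y => (w y)⁻¹ * pd k w y * X k y) :=
    fun k => (hv.mul (hw.pd hU k)).mul (hX k)
  have hE : ∀ k : Fin 4, SmOn U (fun y => (w y)⁻¹ * pd k w y * X k y + pd k (X k) y) :=
    fun k => (hE1 k).add ((hX k).pd hU k)
  have key : ∀ y ∈ U, cDiv w X y
      = ∑ k : Fin 4, ((w y)⁻¹ * pd k w y * X k y + pd k (X k) y) :=
    fun y hy => cDiv_pt hU hw hw0 hX hy
  rw [pd_congr_on hU key hx i, pd_sum (fun k _ => SmOn.diffAt hU (hE k) hx) i]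
  refine Finset.sum_congr rfl fun k _ => ?_
  rw [pd_add (SmOn.diffAt hU (hE1 k) hx) (SmOn.diffAt hU ((hX k).pd hU k) hx),
    pd_mul (SmOn.diffAt hU (hv.mul (hw.pd hU k)) hx) (SmOn.diffAt hU (hX k) hx),
    pd_mul (SmOn.diffAt hU hv hx) (SmOn.diffAt hU (hw.pd hU k) hx),
    pd_inv (SmOn.diffAt hU hw hx) hwx i]
  ring

def XappF (X : Fin 4 → Pt → ℝ) (f : Pt → ℝ) (x : Pt) : ℝ := ∑ γ : Fin 4, X γ x * pd γ f x

lemma smOn_XappF (hU : IsOpen U) (hX : ∀ k, SmOn U (X k)) (hφ : SmOn U φ) :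
    SmOn U (XappF X φ) :=
  ContDiffOn.sum fun k _ => (hX k).mul (hφ.pd hU k)

lemma pd_XappF (hU : IsOpen U) (hX : ∀ k, SmOn U (X k)) (hφ : SmOn U φ)
    (hx : x ∈ U) (j : Fin 4) :
    pd j (XappF X φ) x
      = ∑ k : Fin 4, (pd j (X k) x * pd k φ x + X k x * pd j (fun z => pd k φ z) x) := by
  unfold XappF
  rw [pd_sum (fun k _ => SmOn.diffAt hU ((hX k).mul (hφ.pd hU k)) hx) j]
  exact Finset.sum_congr rfl fun k _ =>
    pd_mul (SmOn.diffAt hU (hX k) hx) (SmOn.diffAt hU (hφ.pd hU k) hx) j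

lemma pd2_XappF (hU : IsOpen U) (hX : ∀ k, SmOn U (X k)) (hφ : SmOn U φ)
    (hx : x ∈ U) (i j : Fin 4) :
    pd i (fun y => pd j (XappF X φ) y) x
      = ∑ k : Fin 4,
        (pd i (fun y => pd j (X k) y) x * pd k φ x
          + pd j (X k) x * pd i (fun y => pd k φ y) x
          + pd i (X k) x * pd j (fun z => pd k φ z) x
          + X k x * pd i (fun y => pd j (fun z => pd k φ z) y) x) := by
  have hE1 : ∀ k : Fin 4, SmOn U (fun y => pd j (X k) y * pd k φ y) :=
    fun k => ((hX k).pd hU j).mul (hφ.pd hU k)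
  have hE2 : ∀ k : Fin 4, SmOn U (fun y => X k y * pd j (fun z => pd k φ z) y) :=
    fun k => (hX k).mul (((hφ.pd hU k)).pd hU j)
  have key : ∀ y ∈ U, pd j (XappF X φ) y
      = ∑ k : Fin 4, (pd j (X k) y * pd k φ y + X k y * pd j (fun z => pd k φ z) y) :=
    fun y hy => pd_XappF hU hX hφ hy j
  rw [pd_congr_on hU key hx i,
    pd_sum (fun k _ => SmOn.diffAt hU ((hE1 k).add (hE2 k)) hx) i]
  refine Finset.sum_congr rfl fun k _ => ?_
  rw [pd_add (SmOn.diffAt hU (hE1 k) hx) (SmOn.diffAt hU (hE2 k) hx),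
    pd_mul (SmOn.diffAt hU ((hX k).pd hU j) hx) (SmOn.diffAt hU (hφ.pd hU k) hx),
    pd_mul (SmOn.diffAt hU (hX k) hx) (SmOn.diffAt hU ((hφ.pd hU k).pd hU j) hx)]
  ring

def lieTF (X : Fin 4 → Pt → ℝ) (R : Pt → Fin 4 → Fin 4 → ℝ) (x : Pt) (α β : Fin 4) : ℝ :=
  (∑ γ : Fin 4, X γ x * pd γ (fun y => R y α β) x)
    - (∑ γ : Fin 4, R x γ β * pd γ (X α) x)
    - (∑ γ : Fin 4, R x α γ * pd γ (X β) x)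

lemma smOn_lieTF (hU : IsOpen U) (hX : ∀ k, SmOn U (X k))
    (hR : ∀ i j, SmOn U (fun y => R y i j)) (i j : Fin 4) :
    SmOn U (fun y => lieTF X R y i j) := by
  refine ContDiffOn.sub (ContDiffOn.sub ?_ ?_) ?_
  · exact ContDiffOn.sum fun k _ => (hX k).mul ((hR i j).pd hU k)
  · exact ContDiffOn.sum fun k _ => (hR k j).mul ((hX i).pd hU k)
  · exact ContDiffOn.sum fun k _ => (hR i k).mul ((hX j).pd hU k)

lemma pd_lieTF (hU : IsOpen U) (hX : ∀ k, SmOn U (X k))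
    (hR : ∀ i j, SmOn U (fun y => R y i j)) (hx : x ∈ U) (a i j : Fin 4) :
    pd a (fun y => lieTF X R y i j) x
      = (∑ k : Fin 4, (pd a (X k) x * pd k (fun y => R y i j) x
            + X k x * pd a (fun y => pd k (fun z => R z i j) y) x))
        - (∑ k : Fin 4, (pd a (fun y => R y k j) x * pd k (X i) x
            + R x k j * pd a (fun y => pd k (X i) y) x))
        - (∑ k : Fin 4, (pd a (fun y => R y i k) x * pd k (X j) x
            + R x i k * pd a (fun y => pd k (X j) y) x)) := by
  have h1 : ∀ k : Fin 4, SmOn U (fun y => X k y * pd k (fun z => R z i j) y) :=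
    fun k => (hX k).mul ((hR i j).pd hU k)
  have h2 : ∀ k : Fin 4, SmOn U (fun y => R y k j * pd k (X i) y) :=
    fun k => (hR k j).mul ((hX i).pd hU k)
  have h3 : ∀ k : Fin 4, SmOn U (fun y => R y i k * pd k (X j) y) :=
    fun k => (hR i k).mul ((hX j).pd hU k)
  have e : (fun y => lieTF X R y i j) = fun y =>
      ((∑ k : Fin 4, X k y * pd k (fun z => R z i j) y)
        - (∑ k : Fin 4, R y k j * pd k (X i) y))
        - (∑ k : Fin 4, R y i k * pd k (X j) y) := rfl
  rw [e, pd_sub (DifferentiableAt.fun_sub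
      (SmOn.diffAt hU (ContDiffOn.sum fun k _ => h1 k) hx)
      (SmOn.diffAt hU (ContDiffOn.sum fun k _ => h2 k) hx))
      (SmOn.diffAt hU (ContDiffOn.sum fun k _ => h3 k) hx),
    pd_sub (SmOn.diffAt hU (ContDiffOn.sum fun k _ => h1 k) hx)
      (SmOn.diffAt hU (ContDiffOn.sum fun k _ => h2 k) hx),
    pd_sum (fun k _ => SmOn.diffAt hU (h1 k) hx) a,
    pd_sum (fun k _ => SmOn.diffAt hU (h2 k) hx) a,
    pd_sum (fun k _ => SmOn.diffAt hU (h3 k) hx) a]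
  rw [Finset.sum_congr rfl (fun k (_ : k ∈ Finset.univ) =>
      pd_mul (SmOn.diffAt hU (hX k) hx) (SmOn.diffAt hU ((hR i j).pd hU k) hx) a),
    Finset.sum_congr rfl (fun k (_ : k ∈ Finset.univ) =>
      pd_mul (SmOn.diffAt hU (hR k j) hx) (SmOn.diffAt hU ((hX i).pd hU k) hx) a),
    Finset.sum_congr rfl (fun k (_ : k ∈ Finset.univ) =>
      pd_mul (SmOn.diffAt hU (hR i k) hx) (SmOn.diffAt hU ((hX j).pd hU k) hx) a)]

lemma block_id {f g : Fin 4 → Fin 4 → Fin 4 → ℝ} (h : ∀ a i j, f a i j = g a i j) :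
    (∑ a : Fin 4, ∑ i : Fin 4, ∑ j : Fin 4, f a i j)
      = ∑ a : Fin 4, ∑ i : Fin 4, ∑ j : Fin 4, g a i j :=
  Finset.sum_congr rfl fun a _ => Finset.sum_congr rfl fun i _ =>
    Finset.sum_congr rfl fun j _ => h a i j

lemma block_rot {f g : Fin 4 → Fin 4 → Fin 4 → ℝ} (h : ∀ a i j, f a i j = g i j a) :
    (∑ a : Fin 4, ∑ i : Fin 4, ∑ j : Fin 4, f a i j)
      = ∑ i : Fin 4, ∑ j : Fin 4, ∑ k : Fin 4, g i j k := by
  rw [block_id h]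
  rw [Finset.sum_comm]
  exact Finset.sum_congr rfl fun i _ => Finset.sum_comm

lemma block_swap23 {f g : Fin 4 → Fin 4 → Fin 4 → ℝ} (h : ∀ i j k, f i j k = g i k j) :
    (∑ i : Fin 4, ∑ j : Fin 4, ∑ k : Fin 4, f i j k)
      = ∑ i : Fin 4, ∑ j : Fin 4, ∑ k : Fin 4, g i j k := by
  rw [block_id h]
  exact Finset.sum_congr rfl fun i _ => Finset.sum_comm

lemma block_swap13 {f g : Fin 4 → Fin 4 → Fin 4 → ℝ} (h : ∀ i j k, f i j k = g k j i) :
    (∑ i : Fin 4, ∑ j : Fin 4, ∑ k : Fin 4, f i j k)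
      = ∑ i : Fin 4, ∑ j : Fin 4, ∑ k : Fin 4, g i j k := by
  rw [block_id h]
  rw [Finset.sum_congr rfl fun i (_ : i ∈ Finset.univ) =>
    (Finset.sum_comm : (∑ j : Fin 4, ∑ k : Fin 4, g k j i) = _), Finset.sum_comm]
  exact Finset.sum_congr rfl fun k _ => Finset.sum_comm

lemma sum3_neg (f : Fin 4 → Fin 4 → Fin 4 → ℝ) :
    (∑ i : Fin 4, ∑ j : Fin 4, ∑ k : Fin 4, -f i j k)
      = -(∑ i : Fin 4, ∑ j : Fin 4, ∑ k : Fin 4, f i j k) := by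
  simp

theorem main_gen (hU : IsOpen U) (hw : SmOn U w) (hw0 : ∀ y ∈ U, w y ≠ 0)
    (hR : ∀ i j, SmOn U (fun y => R y i j)) (hX : ∀ k, SmOn U (X k)) (hφ : SmOn U φ)
    (hx : x ∈ U) :
    XappF X (Dw w R φ) x - Dw w R (XappF X φ) x
      = Dw w (lieTF X R) φ x
        + ∑ i : Fin 4, ∑ j : Fin 4, R x i j * pd i (cDiv w X) x * pd j φ x := by
  -- symmetry facts
  have symW : ∀ a b : Fin 4, pd a (fun y => pd b w y) x = pd b (fun y => pd a w y) x :=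
    fun a b => pd_symm hU hw hx a b
  have symP : ∀ a b : Fin 4, pd a (fun y => pd b φ y) x = pd b (fun y => pd a φ y) x :=
    fun a b => pd_symm hU hφ hx a b
  have symR : ∀ a b i j : Fin 4, pd a (fun y => pd b (fun z => R z i j) y) x
      = pd b (fun y => pd a (fun z => R z i j) y) x :=
    fun a b i j => pd_symm hU (hR i j) hx a b
  have symX : ∀ a b k : Fin 4, pd a (fun y => pd b (X k) y) x
      = pd b (fun y => pd a (X k) y) x :=
    fun a b k => pd_symm hU (hX k) hx a b
  have symP3 : ∀ a i j : Fin 4, pd a (fun y => pd i (fun z => pd j φ z) y) x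
      = pd i (fun y => pd j (fun z => pd a φ z) y) x := by
    intro a i j
    rw [pd_symm hU (hφ.pd hU j) hx a i]
    exact pd_congr_on hU (fun y hy => pd_symm hU hφ hy a j) hx i
  -- LHS part 1
  have hA : XappF X (Dw w R φ) x = ∑ a : Fin 4, ∑ i : Fin 4, ∑ j : Fin 4,
        (-((w x ^ 2)⁻¹ * X a x * pd a w x * pd i w x * R x i j * pd j φ x)
          + (w x)⁻¹ * X a x * pd a (fun y => pd i w y) x * R x i j * pd j φ x
          + (w x)⁻¹ * X a x * pd i w x * pd a (fun y => R y i j) x * pd j φ x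
          + (w x)⁻¹ * X a x * pd i w x * R x i j * pd a (fun y => pd j φ y) x
          + X a x * pd a (fun y => pd i (fun z => R z i j) y) x * pd j φ x
          + X a x * pd i (fun y => R y i j) x * pd a (fun y => pd j φ y) x
          + X a x * pd a (fun y => R y i j) x * pd i (fun y => pd j φ y) x
          + X a x * R x i j * pd a (fun y => pd i (fun z => pd j φ z) y) x) := by
    refine Finset.sum_congr rfl fun a _ => ?_
    rw [pd_Dw hU hw hw0 hR hφ hx a, Finset.mul_sum]
    refine Finset.sum_congr rfl fun i _ => ?_
    rw [Finset.mul_sum]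
    exact Finset.sum_congr rfl fun j _ => by ring
  -- LHS part 2
  have hB : Dw w R (XappF X φ) x = ∑ i : Fin 4, ∑ j : Fin 4, ∑ k : Fin 4,
        ((w x)⁻¹ * pd i w x * R x i j * pd j (X k) x * pd k φ x
          + (w x)⁻¹ * pd i w x * R x i j * X k x * pd j (fun y => pd k φ y) x
          + pd i (fun y => R y i j) x * pd j (X k) x * pd k φ x
          + pd i (fun y => R y i j) x * X k x * pd j (fun y => pd k φ y) x
          + R x i j * pd i (fun y => pd j (X k) y) x * pd k φ x
          + R x i j * pd j (X k) x * pd i (fun y => pd k φ y) x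
          + R x i j * pd i (X k) x * pd j (fun y => pd k φ y) x
          + R x i j * X k x * pd i (fun y => pd j (fun z => pd k φ z) y) x) := by
    rw [Dw_pt hU hw hw0 hR (smOn_XappF hU hX hφ) hx]
    refine Finset.sum_congr rfl fun i _ => ?_
    refine Finset.sum_congr rfl fun j _ => ?_
    rw [pd_XappF hU hX hφ hx j, pd2_XappF hU hX hφ hx i j,
      Finset.mul_sum, Finset.mul_sum, Finset.mul_sum,
      ← Finset.sum_add_distrib, ← Finset.sum_add_distrib]
    exact Finset.sum_congr rfl fun k _ => by ring
  -- RHS part 1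
  have hC : Dw w (lieTF X R) φ x = ∑ i : Fin 4, ∑ j : Fin 4, ∑ k : Fin 4,
        ((w x)⁻¹ * pd i w x * X k x * pd k (fun y => R y i j) x * pd j φ x
          + -((w x)⁻¹ * pd i w x * R x k j * pd k (X i) x * pd j φ x)
          + -((w x)⁻¹ * pd i w x * R x i k * pd k (X j) x * pd j φ x)
          + pd i (X k) x * pd k (fun y => R y i j) x * pd j φ x
          + X k x * pd i (fun y => pd k (fun z => R z i j) y) x * pd j φ x
          + -(pd i (fun y => R y k j) x * pd k (X i) x * pd j φ x)
          + -(R x k j * pd i (fun y => pd k (X i) y) x * pd j φ x)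
          + -(pd i (fun y => R y i k) x * pd k (X j) x * pd j φ x)
          + -(R x i k * pd i (fun y => pd k (X j) y) x * pd j φ x)
          + X k x * pd k (fun y => R y i j) x * pd i (fun y => pd j φ y) x
          + -(R x k j * pd k (X i) x * pd i (fun y => pd j φ y) x)
          + -(R x i k * pd k (X j) x * pd i (fun y => pd j φ y) x)) := by
    rw [Dw_pt hU hw hw0 (smOn_lieTF hU hX hR) hφ hx]
    refine Finset.sum_congr rfl fun i _ => ?_
    refine Finset.sum_congr rfl fun j _ => ?_
    have eL : lieTF X R x i j = ∑ k : Fin 4,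
        (X k x * pd k (fun y => R y i j) x - R x k j * pd k (X i) x
          - R x i k * pd k (X j) x) := by
      rw [Finset.sum_sub_distrib, Finset.sum_sub_distrib]
      rfl
    have eP : pd i (fun y => lieTF X R y i j) x = ∑ k : Fin 4,
        ((pd i (X k) x * pd k (fun y => R y i j) x
            + X k x * pd i (fun y => pd k (fun z => R z i j) y) x)
          - (pd i (fun y => R y k j) x * pd k (X i) x
            + R x k j * pd i (fun y => pd k (X i) y) x)
          - (pd i (fun y => R y i k) x * pd k (X j) x
            + R x i k * pd i (fun y => pd k (X j) y) x)) := by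
      rw [pd_lieTF hU hX hR hx i i j, Finset.sum_sub_distrib, Finset.sum_sub_distrib]
    rw [eL, eP, Finset.mul_sum, Finset.sum_mul, Finset.sum_mul, Finset.sum_mul,
      ← Finset.sum_add_distrib, ← Finset.sum_add_distrib]
    exact Finset.sum_congr rfl fun k _ => by ring
  -- RHS part 2
  have hD : (∑ i : Fin 4, ∑ j : Fin 4, R x i j * pd i (cDiv w X) x * pd j φ x)
      = ∑ i : Fin 4, ∑ j : Fin 4, ∑ k : Fin 4,
        (-((w x ^ 2)⁻¹ * R x i j * pd i w x * pd k w x * X k x * pd j φ x)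
          + (w x)⁻¹ * R x i j * pd i (fun y => pd k w y) x * X k x * pd j φ x
          + (w x)⁻¹ * R x i j * pd k w x * pd i (X k) x * pd j φ x
          + R x i j * pd i (fun y => pd k (X k) y) x * pd j φ x) := by
    refine Finset.sum_congr rfl fun i _ => ?_
    refine Finset.sum_congr rfl fun j _ => ?_
    rw [pd_cDiv hU hw hw0 hX hx i, Finset.mul_sum, Finset.sum_mul]
    exact Finset.sum_congr rfl fun k _ => by ring
  have hAs : ∑ a : Fin 4, ∑ i : Fin 4, ∑ j : Fin 4,
        (-((w x ^ 2)⁻¹ * X a x * pd a w x * pd i w x * R x i j * pd j φ x)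
          + (w x)⁻¹ * X a x * pd a (fun y => pd i w y) x * R x i j * pd j φ x
          + (w x)⁻¹ * X a x * pd i w x * pd a (fun y => R y i j) x * pd j φ x
          + (w x)⁻¹ * X a x * pd i w x * R x i j * pd a (fun y => pd j φ y) x
          + X a x * pd a (fun y => pd i (fun z => R z i j) y) x * pd j φ x
          + X a x * pd i (fun y => R y i j) x * pd a (fun y => pd j φ y) x
          + X a x * pd a (fun y => R y i j) x * pd i (fun y => pd j φ y) x
          + X a x * R x i j * pd a (fun y => pd i (fun z => pd j φ z) y) x)
      = (∑ a : Fin 4, ∑ i : Fin 4, ∑ j : Fin 4,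
        (-((w x ^ 2)⁻¹ * X a x * pd a w x * pd i w x * R x i j * pd j φ x))
      + ∑ a : Fin 4, ∑ i : Fin 4, ∑ j : Fin 4,
        ((w x)⁻¹ * X a x * pd a (fun y => pd i w y) x * R x i j * pd j φ x)
      + ∑ a : Fin 4, ∑ i : Fin 4, ∑ j : Fin 4,
        ((w x)⁻¹ * X a x * pd i w x * pd a (fun y => R y i j) x * pd j φ x)
      + ∑ a : Fin 4, ∑ i : Fin 4, ∑ j : Fin 4,
        ((w x)⁻¹ * X a x * pd i w x * R x i j * pd a (fun y => pd j φ y) x)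
      + ∑ a : Fin 4, ∑ i : Fin 4, ∑ j : Fin 4,
        (X a x * pd a (fun y => pd i (fun z => R z i j) y) x * pd j φ x)
      + ∑ a : Fin 4, ∑ i : Fin 4, ∑ j : Fin 4,
        (X a x * pd i (fun y => R y i j) x * pd a (fun y => pd j φ y) x)
      + ∑ a : Fin 4, ∑ i : Fin 4, ∑ j : Fin 4,
        (X a x * pd a (fun y => R y i j) x * pd i (fun y => pd j φ y) x)
      + ∑ a : Fin 4, ∑ i : Fin 4, ∑ j : Fin 4,
        (X a x * R x i j * pd a (fun y => pd i (fun z => pd j φ z) y) x)) := by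
    simp only [Finset.sum_add_distrib]
  have hBs : ∑ i : Fin 4, ∑ j : Fin 4, ∑ k : Fin 4,
        ((w x)⁻¹ * pd i w x * R x i j * pd j (X k) x * pd k φ x
          + (w x)⁻¹ * pd i w x * R x i j * X k x * pd j (fun y => pd k φ y) x
          + pd i (fun y => R y i j) x * pd j (X k) x * pd k φ x
          + pd i (fun y => R y i j) x * X k x * pd j (fun y => pd k φ y) x
          + R x i j * pd i (fun y => pd j (X k) y) x * pd k φ x
          + R x i j * pd j (X k) x * pd i (fun y => pd k φ y) x
          + R x i j * pd i (X k) x * pd j (fun y => pd k φ y) x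
          + R x i j * X k x * pd i (fun y => pd j (fun z => pd k φ z) y) x)
      = (∑ i : Fin 4, ∑ j : Fin 4, ∑ k : Fin 4,
        ((w x)⁻¹ * pd i w x * R x i j * pd j (X k) x * pd k φ x)
      + ∑ i : Fin 4, ∑ j : Fin 4, ∑ k : Fin 4,
        ((w x)⁻¹ * pd i w x * R x i j * X k x * pd j (fun y => pd k φ y) x)
      + ∑ i : Fin 4, ∑ j : Fin 4, ∑ k : Fin 4,
        (pd i (fun y => R y i j) x * pd j (X k) x * pd k φ x)
      + ∑ i : Fin 4, ∑ j : Fin 4, ∑ k : Fin 4,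
        (pd i (fun y => R y i j) x * X k x * pd j (fun y => pd k φ y) x)
      + ∑ i : Fin 4, ∑ j : Fin 4, ∑ k : Fin 4,
        (R x i j * pd i (fun y => pd j (X k) y) x * pd k φ x)
      + ∑ i : Fin 4, ∑ j : Fin 4, ∑ k : Fin 4,
        (R x i j * pd j (X k) x * pd i (fun y => pd k φ y) x)
      + ∑ i : Fin 4, ∑ j : Fin 4, ∑ k : Fin 4,
        (R x i j * pd i (X k) x * pd j (fun y => pd k φ y) x)
      + ∑ i : Fin 4, ∑ j : Fin 4, ∑ k : Fin 4,
        (R x i j * X k x * pd i (fun y => pd j (fun z => pd k φ z) y) x)) := by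
    simp only [Finset.sum_add_distrib]
  have hCs : ∑ i : Fin 4, ∑ j : Fin 4, ∑ k : Fin 4,
        ((w x)⁻¹ * pd i w x * X k x * pd k (fun y => R y i j) x * pd j φ x
          + -((w x)⁻¹ * pd i w x * R x k j * pd k (X i) x * pd j φ x)
          + -((w x)⁻¹ * pd i w x * R x i k * pd k (X j) x * pd j φ x)
          + pd i (X k) x * pd k (fun y => R y i j) x * pd j φ x
          + X k x * pd i (fun y => pd k (fun z => R z i j) y) x * pd j φ x
          + -(pd i (fun y => R y k j) x * pd k (X i) x * pd j φ x)
          + -(R x k j * pd i (fun y => pd k (X i) y) x * pd j φ x)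
          + -(pd i (fun y => R y i k) x * pd k (X j) x * pd j φ x)
          + -(R x i k * pd i (fun y => pd k (X j) y) x * pd j φ x)
          + X k x * pd k (fun y => R y i j) x * pd i (fun y => pd j φ y) x
          + -(R x k j * pd k (X i) x * pd i (fun y => pd j φ y) x)
          + -(R x i k * pd k (X j) x * pd i (fun y => pd j φ y) x))
      = (∑ i : Fin 4, ∑ j : Fin 4, ∑ k : Fin 4,
        ((w x)⁻¹ * pd i w x * X k x * pd k (fun y => R y i j) x * pd j φ x)
      + ∑ i : Fin 4, ∑ j : Fin 4, ∑ k : Fin 4,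
        (-((w x)⁻¹ * pd i w x * R x k j * pd k (X i) x * pd j φ x))
      + ∑ i : Fin 4, ∑ j : Fin 4, ∑ k : Fin 4,
        (-((w x)⁻¹ * pd i w x * R x i k * pd k (X j) x * pd j φ x))
      + ∑ i : Fin 4, ∑ j : Fin 4, ∑ k : Fin 4,
        (pd i (X k) x * pd k (fun y => R y i j) x * pd j φ x)
      + ∑ i : Fin 4, ∑ j : Fin 4, ∑ k : Fin 4,
        (X k x * pd i (fun y => pd k (fun z => R z i j) y) x * pd j φ x)
      + ∑ i : Fin 4, ∑ j : Fin 4, ∑ k : Fin 4,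
        (-(pd i (fun y => R y k j) x * pd k (X i) x * pd j φ x))
      + ∑ i : Fin 4, ∑ j : Fin 4, ∑ k : Fin 4,
        (-(R x k j * pd i (fun y => pd k (X i) y) x * pd j φ x))
      + ∑ i : Fin 4, ∑ j : Fin 4, ∑ k : Fin 4,
        (-(pd i (fun y => R y i k) x * pd k (X j) x * pd j φ x))
      + ∑ i : Fin 4, ∑ j : Fin 4, ∑ k : Fin 4,
        (-(R x i k * pd i (fun y => pd k (X j) y) x * pd j φ x))
      + ∑ i : Fin 4, ∑ j : Fin 4, ∑ k : Fin 4,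
        (X k x * pd k (fun y => R y i j) x * pd i (fun y => pd j φ y) x)
      + ∑ i : Fin 4, ∑ j : Fin 4, ∑ k : Fin 4,
        (-(R x k j * pd k (X i) x * pd i (fun y => pd j φ y) x))
      + ∑ i : Fin 4, ∑ j : Fin 4, ∑ k : Fin 4,
        (-(R x i k * pd k (X j) x * pd i (fun y => pd j φ y) x))) := by
    simp only [Finset.sum_add_distrib]
  have hDs : ∑ i : Fin 4, ∑ j : Fin 4, ∑ k : Fin 4,
        (-((w x ^ 2)⁻¹ * R x i j * pd i w x * pd k w x * X k x * pd j φ x)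
          + (w x)⁻¹ * R x i j * pd i (fun y => pd k w y) x * X k x * pd j φ x
          + (w x)⁻¹ * R x i j * pd k w x * pd i (X k) x * pd j φ x
          + R x i j * pd i (fun y => pd k (X k) y) x * pd j φ x)
      = (∑ i : Fin 4, ∑ j : Fin 4, ∑ k : Fin 4,
        (-((w x ^ 2)⁻¹ * R x i j * pd i w x * pd k w x * X k x * pd j φ x))
      + ∑ i : Fin 4, ∑ j : Fin 4, ∑ k : Fin 4,
        ((w x)⁻¹ * R x i j * pd i (fun y => pd k w y) x * X k x * pd j φ x)
      + ∑ i : Fin 4, ∑ j : Fin 4, ∑ k : Fin 4,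
        ((w x)⁻¹ * R x i j * pd k w x * pd i (X k) x * pd j φ x)
      + ∑ i : Fin 4, ∑ j : Fin 4, ∑ k : Fin 4,
        (R x i j * pd i (fun y => pd k (X k) y) x * pd j φ x)) := by
    simp only [Finset.sum_add_distrib]
  have hb1 : ∑ a : Fin 4, ∑ i : Fin 4, ∑ j : Fin 4,
        (-((w x ^ 2)⁻¹ * X a x * pd a w x * pd i w x * R x i j * pd j φ x))
      = ∑ i : Fin 4, ∑ j : Fin 4, ∑ k : Fin 4,
        (-((w x ^ 2)⁻¹ * R x i j * pd i w x * pd k w x * X k x * pd j φ x)) := by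
    exact block_rot fun a i j => by ring
  have hb2 : ∑ a : Fin 4, ∑ i : Fin 4, ∑ j : Fin 4,
        ((w x)⁻¹ * X a x * pd a (fun y => pd i w y) x * R x i j * pd j φ x)
      = ∑ i : Fin 4, ∑ j : Fin 4, ∑ k : Fin 4,
        ((w x)⁻¹ * R x i j * pd i (fun y => pd k w y) x * X k x * pd j φ x) := by
    exact block_rot fun a i j => by rw [symW a i]; try ring
  have hb3 : ∑ a : Fin 4, ∑ i : Fin 4, ∑ j : Fin 4,
        ((w x)⁻¹ * X a x * pd i w x * pd a (fun y => R y i j) x * pd j φ x)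
      = ∑ i : Fin 4, ∑ j : Fin 4, ∑ k : Fin 4,
        ((w x)⁻¹ * pd i w x * X k x * pd k (fun y => R y i j) x * pd j φ x) := by
    exact block_rot fun a i j => by ring
  have hb4 : ∑ a : Fin 4, ∑ i : Fin 4, ∑ j : Fin 4,
        ((w x)⁻¹ * X a x * pd i w x * R x i j * pd a (fun y => pd j φ y) x)
      = ∑ i : Fin 4, ∑ j : Fin 4, ∑ k : Fin 4,
        ((w x)⁻¹ * pd i w x * R x i j * X k x * pd j (fun y => pd k φ y) x) := by
    exact block_rot fun a i j => by rw [symP a j]; try ring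
  have hb5 : ∑ a : Fin 4, ∑ i : Fin 4, ∑ j : Fin 4,
        (X a x * pd a (fun y => pd i (fun z => R z i j) y) x * pd j φ x)
      = ∑ i : Fin 4, ∑ j : Fin 4, ∑ k : Fin 4,
        (X k x * pd i (fun y => pd k (fun z => R z i j) y) x * pd j φ x) := by
    exact block_rot fun a i j => by rw [symR a i i j]; try ring
  have hb6 : ∑ a : Fin 4, ∑ i : Fin 4, ∑ j : Fin 4,
        (X a x * pd i (fun y => R y i j) x * pd a (fun y => pd j φ y) x)
      = ∑ i : Fin 4, ∑ j : Fin 4, ∑ k : Fin 4,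
        (pd i (fun y => R y i j) x * X k x * pd j (fun y => pd k φ y) x) := by
    exact block_rot fun a i j => by rw [symP a j]; try ring
  have hb7 : ∑ a : Fin 4, ∑ i : Fin 4, ∑ j : Fin 4,
        (X a x * pd a (fun y => R y i j) x * pd i (fun y => pd j φ y) x)
      = ∑ i : Fin 4, ∑ j : Fin 4, ∑ k : Fin 4,
        (X k x * pd k (fun y => R y i j) x * pd i (fun y => pd j φ y) x) := by
    exact block_rot fun a i j => by ring
  have hb8 : ∑ a : Fin 4, ∑ i : Fin 4, ∑ j : Fin 4,
        (X a x * R x i j * pd a (fun y => pd i (fun z => pd j φ z) y) x)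
      = ∑ i : Fin 4, ∑ j : Fin 4, ∑ k : Fin 4,
        (R x i j * X k x * pd i (fun y => pd j (fun z => pd k φ z) y) x) := by
    exact block_rot fun a i j => by rw [symP3 a i j]; try ring
  have hb9 : ∑ i : Fin 4, ∑ j : Fin 4, ∑ k : Fin 4,
        ((w x)⁻¹ * pd i w x * R x i j * pd j (X k) x * pd k φ x)
      = -(∑ i : Fin 4, ∑ j : Fin 4, ∑ k : Fin 4,
        (-((w x)⁻¹ * pd i w x * R x i k * pd k (X j) x * pd j φ x))) := by
    rw [← sum3_neg]
    exact block_swap23 fun i j k => by ring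
  have hb10 : ∑ i : Fin 4, ∑ j : Fin 4, ∑ k : Fin 4,
        ((w x)⁻¹ * R x i j * pd k w x * pd i (X k) x * pd j φ x)
      = -(∑ i : Fin 4, ∑ j : Fin 4, ∑ k : Fin 4,
        (-((w x)⁻¹ * pd i w x * R x k j * pd k (X i) x * pd j φ x))) := by
    rw [← sum3_neg]
    exact block_swap13 fun i j k => by ring
  have hb11 : ∑ i : Fin 4, ∑ j : Fin 4, ∑ k : Fin 4,
        (pd i (fun y => R y i j) x * pd j (X k) x * pd k φ x)
      = -(∑ i : Fin 4, ∑ j : Fin 4, ∑ k : Fin 4,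
        (-(pd i (fun y => R y i k) x * pd k (X j) x * pd j φ x))) := by
    rw [← sum3_neg]
    exact block_swap23 fun i j k => by ring
  have hb12 : ∑ i : Fin 4, ∑ j : Fin 4, ∑ k : Fin 4,
        (pd i (X k) x * pd k (fun y => R y i j) x * pd j φ x)
      = -(∑ i : Fin 4, ∑ j : Fin 4, ∑ k : Fin 4,
        (-(pd i (fun y => R y k j) x * pd k (X i) x * pd j φ x))) := by
    rw [← sum3_neg]
    exact block_swap13 fun i j k => by ring
  have hb13 : ∑ i : Fin 4, ∑ j : Fin 4, ∑ k : Fin 4,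
        (R x i j * pd i (fun y => pd j (X k) y) x * pd k φ x)
      = -(∑ i : Fin 4, ∑ j : Fin 4, ∑ k : Fin 4,
        (-(R x i k * pd i (fun y => pd k (X j) y) x * pd j φ x))) := by
    rw [← sum3_neg]
    exact block_swap23 fun i j k => by ring
  have hb14 : ∑ i : Fin 4, ∑ j : Fin 4, ∑ k : Fin 4,
        (R x i j * pd i (fun y => pd k (X k) y) x * pd j φ x)
      = -(∑ i : Fin 4, ∑ j : Fin 4, ∑ k : Fin 4,
        (-(R x k j * pd i (fun y => pd k (X i) y) x * pd j φ x))) := by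
    rw [← sum3_neg]
    exact block_swap13 fun i j k => by rw [symX i k k]; try ring
  have hb15 : ∑ i : Fin 4, ∑ j : Fin 4, ∑ k : Fin 4,
        (R x i j * pd i (X k) x * pd j (fun y => pd k φ y) x)
      = -(∑ i : Fin 4, ∑ j : Fin 4, ∑ k : Fin 4,
        (-(R x k j * pd k (X i) x * pd i (fun y => pd j φ y) x))) := by
    rw [← sum3_neg]
    exact block_swap13 fun i j k => by rw [symP j k]; try ring
  have hb16 : ∑ i : Fin 4, ∑ j : Fin 4, ∑ k : Fin 4,
        (R x i j * pd j (X k) x * pd i (fun y => pd k φ y) x)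
      = -(∑ i : Fin 4, ∑ j : Fin 4, ∑ k : Fin 4,
        (-(R x i k * pd k (X j) x * pd i (fun y => pd j φ y) x))) := by
    rw [← sum3_neg]
    exact block_swap23 fun i j k => by ring
  rw [show XappF X (Dw w R φ) x = ∑ γ : Fin 4, X γ x * pd γ (Dw w R φ) x from rfl] at hA
  rw [show XappF X (Dw w R φ) x = ∑ γ : Fin 4, X γ x * pd γ (Dw w R φ) x from rfl]
  rw [hA, hAs, hB, hBs, hC, hCs, hD, hDs]
  linear_combination hb1 + hb2 + hb3 + hb4 + hb5 + hb6 + hb7 + hb8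
    - hb9 - hb10 - hb11 - hb12 - hb13 - hb14 - hb15 - hb16

end main

end Aux

/-- the commutator identity
`[X, ∇_αR^{αβ}∇_β]φ = (∇_α(L_XR)^{αβ}∇_β)φ + R^{αβ}∂_α(∇_γX^γ)∂_βφ`. -/
theorem second_order_operator_commutator
    (U : Set Pt) (hU : IsOpen U)
    (g : Pt → Matrix (Fin 4) (Fin 4) ℝ) (hg : IsMetricOn g U)
    (R : Pt → Fin 4 → Fin 4 → ℝ) (hR : ∀ α β, ContDiffOn ℝ (⊤ : ℕ∞) (fun x => R x α β) U)
    (X : Fin 4 → Pt → ℝ) (hX : ∀ α, ContDiffOn ℝ (⊤ : ℕ∞) (X α) U)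
    (φ : Pt → ℝ) (hφ : ContDiffOn ℝ (⊤ : ℕ∞) φ U) :
    ∀ x ∈ U,
      Xapp X (divForm g R φ) x - divForm g R (Xapp X φ) x
        = divForm g (lieT X R) φ x
          + ∑ α : Fin 4, ∑ β : Fin 4, R x α β * pd α (covDiv g X) x * pd β φ x := by
  intro x hx
  have hdet : SmOn U (fun y => (g y).det) := smOn_det hg.smooth
  have hw : SmOn U (fun y => Real.sqrt (adet g y)) :=
    smOn_sqrt_abs hU hdet hg.det_ne
  have hw0 : ∀ y ∈ U, Real.sqrt (adet g y) ≠ 0 :=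
    fun y hy => ne_of_gt (Real.sqrt_pos.mpr (abs_pos.mpr (hg.det_ne y hy)))
  exact main_gen hU hw hw0 hR hX hφ hx
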